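/- Let S be a maximal independent set, x ∈ S, and v ∉ S. Then (S \ {x}) ∪ {v} is a maximal independent set if and only if v is 1-tight with x as its only solution neighbor, and v is adjacent to every vertex of F({x}) \ {v}. -/

import Mathlib

open Finset

variable {V : Type*}

/-- `S` is an independent set in `G`: no two vertices of `S` are adjacent. -/
def Indep (G : SimpleGraph V) (S : Finset V) : Prop :=
  ∀ u ∈ S, ∀ v ∈ S, ¬ G.Adj u v

/-- `S` is a dominating set in `G`: every vertex outside `S` has a neighbor in `S`. -/
def Dominating (G : SimpleGraph V) (S : Finset V) : Prop :=
  ∀ v, v ∉ S → ∃ u ∈ S, G.Adj u v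

/-- `S` is a maximal independent set (w.r.t. set inclusion) in `G`. -/
def MaxIndep (G : SimpleGraph V) (S : Finset V) : Prop :=
  Indep G S ∧ ∀ T, Indep G T → S ⊆ T → T = S

/-- The tightness of a vertex `v` w.r.t. a solution `S`: the number of neighbors of `v` in `S`. -/
def tight [Fintype V] [DecidableEq V] (G : SimpleGraph V) [DecidableRel G.Adj]
    (S : Finset V) (v : V) : ℕ :=
  (G.neighborFinset v ∩ S).card

/-- `F(D)`: the non-solution vertices all of whose solution neighbors lie in `D`. -/
def FD [Fintype V] [DecidableEq V] (G : SimpleGraph V) [DecidableRel G.Adj]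
    (S D : Finset V) : Finset V :=
  Finset.univ.filter (fun v => v ∉ S ∧ G.neighborFinset v ∩ S ⊆ D)

/-- `A` is a maximal independent set of the subgraph of `G` induced on `W`. -/
def MaxIndepIn (G : SimpleGraph V) (W A : Finset V) : Prop :=
  A ⊆ W ∧ Indep G A ∧ ∀ T ⊆ W, Indep G T → A ⊆ T → T = A

/-- `S` is `k`-minimal: no `k`-swap yields a strictly smaller solution. -/
def KMinimal [Fintype V] [DecidableEq V] (G : SimpleGraph V) (S : Finset V) (k : ℕ) : Prop :=
  ¬ ∃ D A : Finset V, D ⊆ S ∧ D.card = k ∧ A ⊆ Finset.univ \ S ∧ A.Nonempty ∧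
      MaxIndep G ((S \ D) ∪ A) ∧ ((S \ D) ∪ A).card < S.card

lemma maxIndep_iff' [DecidableEq V] (G : SimpleGraph V) (S : Finset V) :
    MaxIndep G S ↔ Indep G S ∧ Dominating G S := by
  constructor
  · rintro ⟨hI, hM⟩
    refine ⟨hI, fun w hw => ?_⟩
    by_contra h
    push_neg at h
    have hT : Indep G (insert w S) := by
      intro a ha b hb
      simp only [Finset.mem_insert] at ha hb
      rcases ha with rfl | ha <;> rcases hb with rfl | hb
      · simp
      · exact fun hab => h b hb hab.symm
      · exact fun hab => h a ha hab
      · exact hI a ha b hb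
    have h2 := hM _ hT (Finset.subset_insert _ _)
    exact hw (h2 ▸ Finset.mem_insert_self w S)
  · rintro ⟨hI, hD⟩
    refine ⟨hI, fun T hT hST => ?_⟩
    refine Finset.Subset.antisymm ?_ hST
    intro t ht
    by_contra hts
    obtain ⟨u, hu, hadj⟩ := hD t hts
    exact hT u (hST hu) t ht hadj

theorem stmt_13 [Fintype V] [DecidableEq V] (G : SimpleGraph V) [DecidableRel G.Adj]
    (S : Finset V) (x v : V) (hS : MaxIndep G S) (hx : x ∈ S) (hv : v ∉ S) :
    MaxIndep G ((S \ {x}) ∪ {v}) ↔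
      (G.neighborFinset v ∩ S = {x} ∧ ∀ u ∈ FD G S {x}, u ≠ v → G.Adj v u) := by
  have hvx : v ≠ x := fun h => hv (h ▸ hx)
  have hmem : ∀ u, u ∈ (S \ {x}) ∪ {v} ↔ (u ∈ S ∧ u ≠ x) ∨ u = v := by
    intro u
    simp [Finset.mem_union, Finset.mem_sdiff, or_comm]
  obtain ⟨hSI, hSD⟩ := (maxIndep_iff' G S).mp hS
  rw [maxIndep_iff']
  constructor
  · rintro ⟨hI, hD⟩
    have hvT : v ∈ (S \ {x}) ∪ {v} := (hmem v).mpr (Or.inr rfl)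
    constructor
    · apply Finset.Subset.antisymm
      · intro w hw
        simp only [Finset.mem_inter, SimpleGraph.mem_neighborFinset] at hw
        simp only [Finset.mem_singleton]
        by_contra hwx
        have hwT : w ∈ (S \ {x}) ∪ {v} := (hmem w).mpr (Or.inl ⟨hw.2, hwx⟩)
        exact hI v hvT w hwT hw.1
      · rw [Finset.singleton_subset_iff, Finset.mem_inter,
          SimpleGraph.mem_neighborFinset]
        refine ⟨?_, hx⟩
        have hxT : x ∉ (S \ {x}) ∪ {v} := by
          rw [hmem]; push_neg
          exact ⟨fun _ => rfl, fun h => hvx h.symm⟩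
        obtain ⟨u, hu, hadj⟩ := hD x hxT
        rcases (hmem u).mp hu with ⟨huS, hux⟩ | huv
        · exact absurd hadj (hSI u huS x hx)
        · exact huv ▸ hadj
    · intro u hu huv
      simp only [FD, Finset.mem_filter] at hu
      obtain ⟨-, huS, huN⟩ := hu
      have huT : u ∉ (S \ {x}) ∪ {v} := by
        rw [hmem]; push_neg
        exact ⟨fun h => absurd h huS, huv⟩
      obtain ⟨w, hw, hadj⟩ := hD u huT
      rcases (hmem w).mp hw with ⟨hwS, hwx⟩ | hwv
      · exfalso
        have hmem2 : w ∈ G.neighborFinset u ∩ S := by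
          simp [SimpleGraph.mem_neighborFinset, hadj.symm, hwS]
        exact hwx (Finset.mem_singleton.mp (huN hmem2))
      · exact hwv ▸ hadj
  · rintro ⟨hN, hF⟩
    have hadjvx : G.Adj v x := by
      have h1 : x ∈ G.neighborFinset v ∩ S := hN ▸ Finset.mem_singleton_self x
      exact SimpleGraph.mem_neighborFinset _ _ _ |>.mp (Finset.mem_inter.mp h1).1
    constructor
    · intro a ha b hb
      rcases (hmem a).mp ha with ⟨haS, hax⟩ | hav <;>
        rcases (hmem b).mp hb with ⟨hbS, hbx⟩ | hbv
      · exact hSI a haS b hbS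
      · intro hab
        rw [hbv] at hab
        have h2 : a ∈ G.neighborFinset v ∩ S := by
          simp [SimpleGraph.mem_neighborFinset, hab.symm, haS]
        exact hax (Finset.mem_singleton.mp (hN ▸ h2))
      · intro hab
        rw [hav] at hab
        have h2 : b ∈ G.neighborFinset v ∩ S := by
          simp [SimpleGraph.mem_neighborFinset, hab, hbS]
        exact hbx (Finset.mem_singleton.mp (hN ▸ h2))
      · rw [hav, hbv]; simp
    · intro u hu
      rw [hmem] at hu
      push_neg at hu
      obtain ⟨hu1, huv⟩ := hu
      have hvT : v ∈ (S \ {x}) ∪ {v} := (hmem v).mpr (Or.inr rfl)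
      by_cases huS : u ∈ S
      · have hux : u = x := hu1 huS
        exact ⟨v, hvT, hux ▸ hadjvx⟩
      · by_cases hsub : G.neighborFinset u ∩ S ⊆ {x}
        · have huFD : u ∈ FD G S {x} :=
            Finset.mem_filter.mpr ⟨Finset.mem_univ u, huS, hsub⟩
          exact ⟨v, hvT, hF u huFD huv⟩
        · obtain ⟨w, hw, hwx⟩ := Finset.not_subset.mp hsub
          simp only [Finset.mem_inter, SimpleGraph.mem_neighborFinset] at hw
          simp only [Finset.mem_singleton] at hwx
          exact ⟨w, (hmem w).mpr (Or.inl ⟨hw.2, hwx⟩), hw.1.symm⟩
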